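/- In ℝ with the Euclidean metric, let the class Y be the interval [−r, r] with r > 0 and class B its complement. For x ∈ (0, r), the strong counterfactuals of x (with respect to the closure, i.e., achieving cfd) do not exist inside B open, but cfd(x) = r − x; and for x₁ = t, x₂ = −t with 0 < t < r, the minimizing boundary points are r and −r respectively, at distance 2r, while d(x₁,x₂) = 2t. Hence for any k > 0, choosing t < r/k yields 2r > k·2t, so the nearest-boundary-point explainer violates the (ε,k)-robustness inequality. -/

import Mathlib

theorem interval_nonrobust (r : ℝ) (hr : 0 < r) :
    (∀ x : ℝ, 0 < x → x < r →
      sInf {s : ℝ | ∃ c : ℝ, r < |c| ∧ s = |x - c|} = r - x) ∧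
    (∀ k : ℝ, 0 < k → ∀ ε : ℝ, 0 < ε → ∃ t : ℝ,
      0 < t ∧ t < r ∧ |t| ≤ r ∧ |(-t : ℝ)| ≤ r ∧
      |t - (-t)| < ε ∧ |r - (-r)| > k * |t - (-t)|) := by
  constructor
  · intro x hx hxr
    have hne : {s : ℝ | ∃ c : ℝ, r < |c| ∧ s = |x - c|}.Nonempty := by
      refine ⟨|x - (r + 1)|, r + 1, ?_, rfl⟩
      rw [abs_of_pos (by linarith)]; linarith
    have hlb : ∀ s ∈ {s : ℝ | ∃ c : ℝ, r < |c| ∧ s = |x - c|}, r - x ≤ s := by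
      rintro s ⟨c, hc, rfl⟩
      rcases lt_or_ge c 0 with hneg | hpos
      · have hcr : c < -r := by rw [abs_of_neg hneg] at hc; linarith
        have : |x - c| = x - c := abs_of_pos (by linarith)
        rw [this]; linarith
      · have : r < c := by rwa [abs_of_nonneg hpos] at hc
        have : |x - c| = c - x := by rw [abs_sub_comm]; exact abs_of_pos (by linarith)
        rw [this]; linarith
    have hbdd : BddBelow {s : ℝ | ∃ c : ℝ, r < |c| ∧ s = |x - c|} := ⟨r - x, hlb⟩
    refine le_antisymm ?_ (le_csInf hne hlb)
    rw [Real.sInf_le_iff hbdd hne]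
    intro ε hε
    refine ⟨|x - (r + ε/2)|, ⟨r + ε/2, ?_, rfl⟩, ?_⟩
    · rw [abs_of_pos (by linarith)]; linarith
    · rw [abs_sub_comm, abs_of_pos (by linarith)]; linarith
  · intro k hk ε hε
    refine ⟨min (ε/3) (min (r/(2*k)) (r/2)), ?_, ?_, ?_, ?_, ?_, ?_⟩
    · positivity
    · calc min (ε/3) (min (r/(2*k)) (r/2)) ≤ r/2 := le_trans (min_le_right _ _) (min_le_right _ _)
        _ < r := by linarith
    · rw [abs_of_pos (by positivity)]
      calc min (ε/3) (min (r/(2*k)) (r/2)) ≤ r/2 := le_trans (min_le_right _ _) (min_le_right _ _)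
        _ ≤ r := by linarith
    · rw [abs_neg, abs_of_pos (by positivity)]
      calc min (ε/3) (min (r/(2*k)) (r/2)) ≤ r/2 := le_trans (min_le_right _ _) (min_le_right _ _)
        _ ≤ r := by linarith
    · have h1 : min (ε/3) (min (r/(2*k)) (r/2)) ≤ ε/3 := min_le_left _ _
      have h2 : (0:ℝ) < min (ε/3) (min (r/(2*k)) (r/2)) := by positivity
      rw [sub_neg_eq_add, abs_of_pos (by linarith)]; linarith
    · have h1 : min (ε/3) (min (r/(2*k)) (r/2)) ≤ r/(2*k) :=
        le_trans (min_le_right _ _) (min_le_left _ _)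
      have h2 : (0:ℝ) < min (ε/3) (min (r/(2*k)) (r/2)) := by positivity
      rw [sub_neg_eq_add, abs_of_pos (by linarith), sub_neg_eq_add, abs_of_pos (by linarith)]
      have : k * (r/(2*k)) = r/2 := by field_simp
      nlinarith [mul_le_mul_of_nonneg_left h1 hk.le]
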